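/- For any odd prime p and any nonnegative integer k, we have C_{p-1}^{(-k-1)} ≡ 1 (mod p). -/
import Mathlib

/-- Stirling numbers of the second kind. -/
def stirling2 : ℕ → ℕ → ℕ
  | 0, 0 => 1
  | 0, _ + 1 => 0
  | _ + 1, 0 => 0
  | n + 1, m + 1 => (m + 1) * stirling2 n (m + 1) + stirling2 n m

/-- The poly-Bernoulli number `B_n^{(-k)}` with negative upper index `-k`. -/
def polyBernoulliB (k n : ℕ) : ℤ :=
  (-1 : ℤ) ^ n * ∑ m ∈ Finset.range (n + 1),
    (-1 : ℤ) ^ m * (m.factorial : ℤ) * (stirling2 n m : ℤ) * ((m : ℤ) + 1) ^ k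

/-- The poly-Bernoulli number of type C, `C_n^{(-k)}`, with negative upper index `-k`. -/
def polyBernoulliC (k n : ℕ) : ℤ :=
  (-1 : ℤ) ^ n * ∑ m ∈ Finset.range (n + 1),
    (-1 : ℤ) ^ m * (m.factorial : ℤ) * (stirling2 (n + 1) (m + 1) : ℤ) * ((m : ℤ) + 1) ^ k

lemma stirling2_key (n : ℕ) : ∀ m : ℕ,
    (-1 : ℤ) ^ m * (m.factorial : ℤ) * (stirling2 (n + 1) (m + 1) : ℤ) =
      ∑ l ∈ Finset.range (m + 1), (-1 : ℤ) ^ l * (m.choose l : ℤ) * ((l : ℤ) + 1) ^ n := by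
  induction n with
  | zero =>
    intro m
    match m with
    | 0 => simp [stirling2]
    | m' + 1 =>
      have h := Int.alternating_sum_range_choose (n := m' + 1)
      simp only [pow_zero, mul_one, stirling2]
      simp [h]
  | succ n ih =>
    intro m
    match m with
    | 0 =>
      have h0 := ih 0
      simp only [stirling2] at *
      simp at h0 ⊢
      omega
    | m' + 1 =>
      have hA := ih (m' + 1)
      have hB := ih m'
      have hterm : ∀ l ∈ Finset.range (m' + 2),
          (-1 : ℤ) ^ l * ((m' + 1).choose l : ℤ) * ((l : ℤ) + 1) ^ (n + 1)
          = ((m' : ℤ) + 2) * ((-1 : ℤ) ^ l * ((m' + 1).choose l : ℤ) * ((l : ℤ) + 1) ^ n)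
            - ((m' : ℤ) + 1) * ((-1 : ℤ) ^ l * (m'.choose l : ℤ) * ((l : ℤ) + 1) ^ n) := by
        intro l hl
        have hl' : l ≤ m' + 1 := by
          have := Finset.mem_range.mp hl; omega
        have h1 : (m' + 1) * m'.choose l = (m' + 1).choose l * (m' + 1 - l) := by
          rw [Nat.add_one_mul_choose_eq, Nat.choose_succ_right_eq]
        have h2 : ((m' : ℤ) + 1) * (m'.choose l : ℤ) = ((m' + 1).choose l : ℤ) * ((m' : ℤ) + 1 - l) := by
          zify [hl'] at h1
          linarith [h1]
        linear_combination ((-1 : ℤ) ^ l * ((l : ℤ) + 1) ^ n) * h2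
      have hsum : ∑ l ∈ Finset.range (m' + 2), (-1 : ℤ) ^ l * ((m' + 1).choose l : ℤ) * ((l : ℤ) + 1) ^ (n + 1)
          = ((m' : ℤ) + 2) * ∑ l ∈ Finset.range (m' + 2), (-1 : ℤ) ^ l * ((m' + 1).choose l : ℤ) * ((l : ℤ) + 1) ^ n
            - ((m' : ℤ) + 1) * ∑ l ∈ Finset.range (m' + 1), (-1 : ℤ) ^ l * (m'.choose l : ℤ) * ((l : ℤ) + 1) ^ n := by
        rw [Finset.sum_congr rfl hterm, Finset.sum_sub_distrib, ← Finset.mul_sum, ← Finset.mul_sum]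
        congr 2
        rw [Finset.sum_range_succ, Nat.choose_succ_self]
        simp
      show (-1 : ℤ) ^ (m' + 1) * ((m' + 1).factorial : ℤ) * (stirling2 (n + 1 + 1) (m' + 1 + 1) : ℤ) = _
      have hst : (stirling2 (n + 1 + 1) (m' + 1 + 1) : ℤ)
          = ((m' : ℤ) + 2) * (stirling2 (n + 1) (m' + 2) : ℤ) + (stirling2 (n + 1) (m' + 1) : ℤ) := by
        show ((stirling2 (n + 1 + 1) (m' + 1 + 1) : ℕ) : ℤ) = _
        rw [show stirling2 (n + 1 + 1) (m' + 1 + 1) = (m' + 1 + 1) * stirling2 (n + 1) (m' + 1 + 1) + stirling2 (n + 1) (m' + 1) from rfl]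
        push_cast
        ring
      rw [hsum, ← hA, ← hB, hst, Nat.factorial_succ]
      push_cast
      ring

theorem polyBernoulliC_pred_prime (p : ℕ) (hp : p.Prime) (hodd : Odd p) (k : ℕ) :
    polyBernoulliC (k + 1) (p - 1) ≡ 1 [ZMOD (p : ℤ)] := by
  haveI : Fact p.Prime := ⟨hp⟩
  have hp2 : 2 ≤ p := hp.two_le
  have hpe : p - 1 + 1 = p := by omega
  have := (ZMod.intCast_eq_intCast_iff (polyBernoulliC (k + 1) (p - 1)) 1 p).mp ?_
  · exact this
  rw [Int.cast_one]
  unfold polyBernoulliC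
  rw [hpe]
  have hrw : ∀ m ∈ Finset.range p,
      (-1 : ℤ) ^ m * (m.factorial : ℤ) * (stirling2 p (m + 1) : ℤ) * ((m : ℤ) + 1) ^ (k + 1)
      = (∑ l ∈ Finset.range (m + 1), (-1 : ℤ) ^ l * (m.choose l : ℤ) * ((l : ℤ) + 1) ^ (p - 1)) * ((m : ℤ) + 1) ^ (k + 1) := by
    intro m _
    have h := stirling2_key (p - 1) m
    rw [hpe] at h
    rw [h]
  rw [Finset.sum_congr rfl hrw]
  push_cast
  have hpow : (-1 : ZMod p) ^ (p - 1) = 1 :=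
    Even.neg_one_pow (Nat.Odd.sub_odd hodd odd_one)
  rw [hpow, one_mul]
  rw [show Finset.range p = Finset.range ((p - 1) + 1) from by rw [hpe], Finset.sum_range_succ]
  have hlast : ((p - 1 : ℕ) : ZMod p) + 1 = 0 := by
    have h : (((p - 1) + 1 : ℕ) : ZMod p) = 0 := by rw [hpe]; exact ZMod.natCast_self p
    push_cast at h
    exact h
  rw [hlast, zero_pow (Nat.succ_ne_zero k), mul_zero, add_zero]
  have hin : ∀ m ∈ Finset.range (p - 1),
      (∑ l ∈ Finset.range (m + 1), (-1 : ZMod p) ^ l * (m.choose l : ZMod p) * ((l : ZMod p) + 1) ^ (p - 1)) * ((m : ZMod p) + 1) ^ (k + 1)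
      = if m = 0 then 1 else 0 := by
    intro m hm
    have hm' : m < p - 1 := Finset.mem_range.mp hm
    have h1 : ∀ l ∈ Finset.range (m + 1),
        (-1 : ZMod p) ^ l * (m.choose l : ZMod p) * ((l : ZMod p) + 1) ^ (p - 1)
        = (-1 : ZMod p) ^ l * (m.choose l : ZMod p) := by
      intro l hl
      have hl' : l < m + 1 := Finset.mem_range.mp hl
      have hne : ((l : ZMod p) + 1) ≠ 0 := by
        have h3 : (((l + 1 : ℕ)) : ZMod p) ≠ 0 := by
          rw [Ne, ZMod.natCast_eq_zero_iff]
          intro hdvd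
          have := Nat.le_of_dvd (by omega) hdvd
          omega
        push_cast at h3
        exact h3
      rw [ZMod.pow_card_sub_one_eq_one hne, mul_one]
    rw [Finset.sum_congr rfl h1]
    have h2 : (∑ l ∈ Finset.range (m + 1), (-1 : ZMod p) ^ l * (m.choose l : ZMod p))
        = (((if m = 0 then 1 else 0 : ℤ)) : ZMod p) := by
      rw [← Int.alternating_sum_range_choose]
      push_cast
      rfl
    rw [h2]
    by_cases hm0 : m = 0
    · subst hm0; simp
    · simp [hm0]
  rw [Finset.sum_congr rfl hin, Finset.sum_ite_eq' (Finset.range (p - 1)) 0 (fun _ => (1 : ZMod p))]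
  have h0mem : 0 ∈ Finset.range (p - 1) := Finset.mem_range.mpr (by omega)
  simp [h0mem]
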